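/- For every integer k ≥ 2 and every real t with α < t < φ², the inequality (k+1)t² - 3kt + k - 1 > 2 holds, where α is the unique positive real root of x^k - 2x^{k-1} - ... - x - 1 and φ = (1+√5)/2. -/

import Mathlib

/-- For every integer k ≥ 2 and every real t with α < t < φ², the inequality
`(k+1)t² - 3kt + k - 1 > 2` holds, where α is the unique positive real root of
`x^k - 2x^(k-1) - ⋯ - x - 1` and φ = (1+√5)/2. -/
theorem quadratic_gt_two (k : ℕ) (hk : 2 ≤ k)
    (α : ℝ) (hαpos : 0 < α)
    (hαroot : α ^ k - 2 * α ^ (k - 1) - ∑ i ∈ Finset.range (k - 1), α ^ i = 0) :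
    ∀ t : ℝ, α < t → t < ((1 + Real.sqrt 5) / 2) ^ 2 →
      ((k : ℝ) + 1) * t ^ 2 - 3 * (k : ℝ) * t + (k : ℝ) - 1 > 2 := by
  intro t ht _hub
  obtain ⟨n, rfl⟩ : ∃ n, k = n + 1 := ⟨k - 1, by omega⟩
  simp only [Nat.add_sub_cancel] at hαroot
  have hn : 1 ≤ n := by omega
  have hpn : (0:ℝ) < α ^ n := pow_pos hαpos n
  have hS : 0 < ∑ i ∈ Finset.range n, α ^ i :=
    Finset.sum_pos (fun i _ => pow_pos hαpos i)
      (Finset.nonempty_range_iff.mpr (by omega))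
  have hα2 : 2 < α := by
    have hsucc : α ^ (n + 1) = α ^ n * α := pow_succ α n
    nlinarith [hS, hαroot, hpn]
  have hgeom : (∑ i ∈ Finset.range n, α ^ i) * (α - 1) = α ^ n - 1 :=
    geom_sum_mul α n
  have hkey : α ^ n * (α ^ 2 - 3 * α + 1) = -1 := by
    have h1 : α ^ (n + 1) - 2 * α ^ n = ∑ i ∈ Finset.range n, α ^ i := by
      linarith [hαroot]
    have h2 : (α ^ (n + 1) - 2 * α ^ n) * (α - 1) = α ^ n - 1 := by
      rw [h1, hgeom]
    have hsucc : α ^ (n + 1) = α ^ n * α := pow_succ α n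
    nlinarith [h2, hsucc]
  have hle : ((n : ℝ) + 1) ≤ α ^ n := by
    have h2n : (n : ℝ) + 1 ≤ 2 ^ n := by
      have := Nat.lt_two_pow_self (n := n)
      exact_mod_cast Nat.succ_le_of_lt this
    have : (2:ℝ) ^ n ≤ α ^ n := pow_le_pow_left₀ (by norm_num) hα2.le n
    linarith
  have hkey2 : ((n : ℝ) + 1) * (α ^ 2 - 3 * α + 1) ≥ -1 := by
    nlinarith [hkey, hle, hpn]
  have hQα : ((n : ℝ) + 1 + 1) * α ^ 2 - 3 * ((n : ℝ) + 1) * α + ((n : ℝ) + 1) - 1 > 2 := by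
    nlinarith [hkey2, hα2]
  have hk0 : (0:ℝ) ≤ (n : ℝ) := Nat.cast_nonneg n
  push_cast
  nlinarith [hQα, mul_pos (sub_pos.2 ht)
    (show (0:ℝ) < ((n:ℝ) + 1 + 1) * (t + α) - 3 * ((n:ℝ)+1) by nlinarith [hα2, ht])]
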